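/- (Lemma 2.1, inequality (2.3.3), whole-space case.) Let l > 0 be noninteger. There is a constant C = C(N, l, p) > 0 such that for every bounded continuous function u : ℝ^N × ℝ → ℝ with ⟨u⟩^{(l)} < ∞ and M_p(u) < ∞, one has sup_{x ∈ ℝ^N, t ≥ 0} |u(x,t)| ≤ C (⟨u⟩^{(l)})^σ (M_p(u))^{1-σ}, where σ = N/(lp+N). -/

import Mathlib

open MeasureTheory Finset ENNReal

/-- Parabolic norm of an increment `H = (h, τ)`: `‖h‖ + |τ|^(1/2)`. -/
noncomputable def pnormH {N : ℕ} (h : EuclideanSpace ℝ (Fin N)) (τ : ℝ) : ℝ :=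
  ‖h‖ + |τ| ^ ((1 : ℝ) / 2)

/-- `k`-th finite difference of `u` along `H = (h, τ)` at `(x, t)`. -/
noncomputable def fdiffP {N : ℕ} (u : EuclideanSpace ℝ (Fin N) × ℝ → ℝ) (k : ℕ)
    (h : EuclideanSpace ℝ (Fin N)) (τ : ℝ) (x : EuclideanSpace ℝ (Fin N)) (t : ℝ) : ℝ :=
  ∑ i ∈ Finset.range (k + 1),
    (-1 : ℝ) ^ (k - i) * (k.choose i : ℝ) * u (x + (i : ℝ) • h, t + (i : ℝ) * τ)

/-- Parabolic Hölder seminorm `⟨u⟩^{(l)}` on `ℝ^N × [0, ∞)`, with `k`-th differences. -/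
noncomputable def semiP {N : ℕ} (u : EuclideanSpace ℝ (Fin N) × ℝ → ℝ) (l : ℝ) (k : ℕ) :
    ℝ≥0∞ :=
  ⨆ (x : EuclideanSpace ℝ (Fin N)) (t : ℝ) (_ : 0 ≤ t)
    (h : EuclideanSpace ℝ (Fin N)) (τ : ℝ) (_ : 0 ≤ τ) (_ : ¬(h = 0 ∧ τ = 0)),
    ENNReal.ofReal (|fdiffP u k h τ x t| / pnormH h τ ^ l)

/-- `L^p` norm of `u` on `ℝ^N × (0, ∞)`. -/
noncomputable def lpP {N : ℕ} (u : EuclideanSpace ℝ (Fin N) × ℝ → ℝ) (p : ℝ) : ℝ≥0∞ :=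
  (∫⁻ z in {z : EuclideanSpace ℝ (Fin N) × ℝ | 0 < z.2},
    ENNReal.ofReal (|u z| ^ p)) ^ (1 / p)

/-- `M_p(u) = sup_{t ≥ 0} ‖u(·, t)‖_{L^p(ℝ^N)}`. -/
noncomputable def mpP {N : ℕ} (u : EuclideanSpace ℝ (Fin N) × ℝ → ℝ) (p : ℝ) : ℝ≥0∞ :=
  ⨆ (t : ℝ) (_ : 0 ≤ t),
    (∫⁻ x : EuclideanSpace ℝ (Fin N), ENNReal.ofReal (|u (x, t)| ^ p)) ^ (1 / p)

/-- Parabolic Hölder norm `|u|^{(l)} = sup |u| + ⟨u⟩^{(l)}` with `k = ⌊l⌋ + 1`. -/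
noncomputable def normP {N : ℕ} (u : EuclideanSpace ℝ (Fin N) × ℝ → ℝ) (l : ℝ) : ℝ≥0∞ :=
  (⨆ (x : EuclideanSpace ℝ (Fin N)) (t : ℝ) (_ : 0 ≤ t), ENNReal.ofReal |u (x, t)|) +
    semiP u l (⌊l⌋₊ + 1)

/-- If a set where `lam ≤ g` is small compared with a ball of radius `r`, one can find a
shift `h` in that ball all of whose multiples up to `k` land outside that set. -/
lemma exists_shift {N k : ℕ} (g : EuclideanSpace ℝ (Fin N) → ℝ)
    (x : EuclideanSpace ℝ (Fin N)) (lam r : ℝ)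
    (hvol : (k : ℝ≥0∞) * volume {y | lam ≤ g y} <
      volume (Metric.ball (0 : EuclideanSpace ℝ (Fin N)) r)) :
    ∃ h : EuclideanSpace ℝ (Fin N), ‖h‖ < r ∧
      ∀ i ∈ Finset.Icc 1 k, g (x + (i : ℝ) • h) < lam := by
  set T : Set (EuclideanSpace ℝ (Fin N)) := {y | lam ≤ g y} with hT
  set bad : Set (EuclideanSpace ℝ (Fin N)) :=
    ⋃ i ∈ Finset.Icc 1 k, {h : EuclideanSpace ℝ (Fin N) | x + (i : ℝ) • h ∈ T} with hbad
  have hbadi : ∀ i ∈ Finset.Icc 1 k,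
      volume {h : EuclideanSpace ℝ (Fin N) | x + (i : ℝ) • h ∈ T} ≤ volume T := by
    intro i hi
    simp only [Finset.mem_Icc] at hi
    have hi0 : ((i : ℝ)) ≠ 0 := by
      exact_mod_cast Nat.one_le_iff_ne_zero.mp hi.1
    have hset : {h : EuclideanSpace ℝ (Fin N) | x + (i : ℝ) • h ∈ T}
        = ((i : ℝ) • ·) ⁻¹' ((fun y => x + y) ⁻¹' T) := by
      ext h; simp [Set.mem_preimage]
    rw [hset, Measure.addHaar_preimage_smul _ hi0, measure_preimage_add]
    have h1 : ENNReal.ofReal |((i : ℝ) ^ (Module.finrank ℝ (EuclideanSpace ℝ (Fin N))))⁻¹| ≤ 1 := by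
      rw [ENNReal.ofReal_le_one]
      rw [abs_of_nonneg (by positivity)]
      rw [inv_le_one_iff₀]
      right
      exact one_le_pow₀ (by exact_mod_cast hi.1)
    calc ENNReal.ofReal |((i : ℝ) ^ (Module.finrank ℝ (EuclideanSpace ℝ (Fin N))))⁻¹| * volume T
        ≤ 1 * volume T := mul_le_mul_of_nonneg_right h1 (zero_le)
      _ = volume T := one_mul _
  have hbadm : volume bad < volume (Metric.ball (0 : EuclideanSpace ℝ (Fin N)) r) := by
    calc volume bad
        ≤ ∑ i ∈ Finset.Icc 1 k, volume {h : EuclideanSpace ℝ (Fin N) | x + (i : ℝ) • h ∈ T} :=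
          measure_biUnion_finset_le _ _
      _ ≤ ∑ _i ∈ Finset.Icc 1 k, volume T := Finset.sum_le_sum hbadi
      _ = (k : ℝ≥0∞) * volume T := by
          rw [Finset.sum_const, Nat.card_Icc]; simp [nsmul_eq_mul]
      _ < volume (Metric.ball (0 : EuclideanSpace ℝ (Fin N)) r) := hvol
  have hne : ¬ (Metric.ball (0 : EuclideanSpace ℝ (Fin N)) r ⊆ bad) :=
    fun hsub => absurd (measure_mono hsub) (not_le.mpr hbadm)
  obtain ⟨h, hhb, hhbad⟩ := Set.not_subset.mp hne
  refine ⟨h, by simpa using hhb, fun i hi => ?_⟩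
  by_contra hcon
  exact hhbad (Set.mem_biUnion hi (by exact not_lt.mp hcon))

/-- If `A ≤ c * r ^ e` for all positive `r` (`e ≠ 0`), then `A ≤ 0`. -/
lemma le_zero_of_forall_rpow {A c e : ℝ} (hA : 0 ≤ A) (hc : 0 ≤ c) (he : e ≠ 0)
    (H : ∀ r : ℝ, 0 < r → A ≤ c * r ^ e) : A ≤ 0 := by
  rcases eq_or_lt_of_le hc with hc0 | hcpos
  · have := H 1 one_pos
    rw [Real.one_rpow, ← hc0] at this
    linarith
  by_contra hA0
  push_neg at hA0
  have hq : 0 < A / (2 * c) := by positivity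
  have hr : (0:ℝ) < (A / (2 * c)) ^ (1 / e) := Real.rpow_pos_of_pos hq _
  have := H _ hr
  rw [← Real.rpow_mul hq.le, one_div_mul_cancel he, Real.rpow_one] at this
  have heq : c * A / (2 * c) = A / 2 := by field_simp
  rw [mul_div_assoc', heq] at this
  linarith

set_option maxHeartbeats 1200000 in
/-- Lemma 2.1, inequality (2.3.3), whole-space case. -/
theorem interpolation_sup_holder_mp (N : ℕ) (hN : 1 ≤ N) (p : ℝ) (hp : 1 < p)
    (l : ℝ) (hl : 0 < l) (hlni : ∀ n : ℤ, (n : ℝ) ≠ l) :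
    ∃ C : ℝ, 0 < C ∧
      ∀ u : EuclideanSpace ℝ (Fin N) × ℝ → ℝ, Continuous u →
        Bornology.IsBounded (Set.range u) →
        semiP u l ⌈l⌉₊ < ⊤ → mpP u p < ⊤ →
        ∀ (x : EuclideanSpace ℝ (Fin N)) (t : ℝ), 0 ≤ t →
          |u (x, t)| ≤ C * (semiP u l ⌈l⌉₊).toReal ^ ((N : ℝ) / (l * p + N)) *
            (mpP u p).toReal ^ (1 - (N : ℝ) / (l * p + N)) := by
  classical
  haveI : Nonempty (Fin N) := ⟨⟨0, hN⟩⟩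
  set k : ℕ := ⌈l⌉₊ with hkdef
  have hk1 : 1 ≤ k := Nat.one_le_iff_ne_zero.mpr (by positivity)
  have hp0 : 0 < p := lt_trans one_pos hp
  set v : ℝ := (volume (Metric.ball (0 : EuclideanSpace ℝ (Fin N)) 1)).toReal with hvdef
  have hv : 0 < v :=
    ENNReal.toReal_pos (Metric.measure_ball_pos _ _ one_pos).ne' measure_ball_lt_top.ne
  set Kc : ℝ := (2 * k / v) ^ (1 / p) with hKdef
  have hKc : 0 < Kc := Real.rpow_pos_of_pos (by positivity) _
  set C₂ : ℝ := 2 ^ k * Kc with hC2def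
  have hC₂ : 0 < C₂ := by positivity
  refine ⟨1 + C₂, by positivity, ?_⟩
  intro u hu _hb hSfin hMfin x t ht
  set S : ℝ := (semiP u l k).toReal with hSdef
  set M : ℝ := (mpP u p).toReal with hMdef
  have hS0 : 0 ≤ S := ENNReal.toReal_nonneg
  have hM0 : 0 ≤ M := ENNReal.toReal_nonneg
  set σ : ℝ := (N : ℝ) / (l * p + N) with hσdef
  have hdenom : 0 < l * p + N := by positivity
  have hσpos : 0 < σ := by
    apply div_pos _ hdenom
    exact_mod_cast hN
  have hσlt : σ < 1 := by
    rw [hσdef, div_lt_one hdenom]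
    nlinarith
  -- Step 0: seminorm bound on finite differences with τ = 0
  have hSle : ∀ h : EuclideanSpace ℝ (Fin N), h ≠ 0 →
      |fdiffP u k h 0 x t| ≤ S * ‖h‖ ^ l := by
    intro h hh
    have hterm : ENNReal.ofReal (|fdiffP u k h 0 x t| / pnormH h 0 ^ l) ≤ semiP u l k :=
      le_iSup_of_le x <| le_iSup_of_le t <| le_iSup_of_le ht <| le_iSup_of_le h <|
        le_iSup_of_le 0 <| le_iSup_of_le le_rfl <| le_iSup_of_le (by simp [hh]) le_rfl
    rw [← ENNReal.ofReal_toReal hSfin.ne] at hterm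
    have hle := (ENNReal.ofReal_le_ofReal_iff ENNReal.toReal_nonneg).mp hterm
    have hpn : pnormH h 0 = ‖h‖ := by
      simp [pnormH, Real.zero_rpow (by norm_num : (1:ℝ)/2 ≠ 0)]
    rw [hpn] at hle
    have hpos : (0:ℝ) < ‖h‖ ^ l := Real.rpow_pos_of_pos (norm_pos_iff.mpr hh) _
    rw [div_le_iff₀ hpos] at hle
    linarith [hle]
  -- Step 0': L^p bound at time t
  have hMle : (∫⁻ y : EuclideanSpace ℝ (Fin N), ENNReal.ofReal (|u (y, t)| ^ p))
      ≤ ENNReal.ofReal (M ^ p) := by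
    have h1 : (∫⁻ y : EuclideanSpace ℝ (Fin N), ENNReal.ofReal (|u (y, t)| ^ p)) ^ ((1:ℝ) / p)
        ≤ mpP u p := le_iSup_of_le t (le_iSup_of_le ht le_rfl)
    have h2 := ENNReal.rpow_le_rpow h1 hp0.le
    rw [← ENNReal.rpow_mul, one_div_mul_cancel hp0.ne', ENNReal.rpow_one] at h2
    calc (∫⁻ y : EuclideanSpace ℝ (Fin N), ENNReal.ofReal (|u (y, t)| ^ p))
        ≤ (mpP u p) ^ p := h2
      _ = ENNReal.ofReal (M ^ p) := by
          rw [← ENNReal.ofReal_rpow_of_nonneg ENNReal.toReal_nonneg hp0.le,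
            ENNReal.ofReal_toReal hMfin.ne]
  -- Chebyshev
  have cheb : ∀ lam : ℝ, 0 < lam →
      ENNReal.ofReal (lam ^ p) * volume {y : EuclideanSpace ℝ (Fin N) | lam ≤ |u (y, t)|}
        ≤ ENNReal.ofReal (M ^ p) := by
    intro lam hlam
    have hmeas : AEMeasurable (fun y : EuclideanSpace ℝ (Fin N) =>
        ENNReal.ofReal (|u (y, t)| ^ p)) volume := by
      apply Continuous.aemeasurable
      apply ENNReal.continuous_ofReal.comp
      exact ((hu.comp (Continuous.prodMk continuous_id continuous_const)).abs).rpow_const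
        (fun _ => Or.inr hp0.le)
    have hsub : {y : EuclideanSpace ℝ (Fin N) | lam ≤ |u (y, t)|}
        ⊆ {y | ENNReal.ofReal (lam ^ p) ≤ ENNReal.ofReal (|u (y, t)| ^ p)} := by
      intro y hy
      exact ENNReal.ofReal_le_ofReal (Real.rpow_le_rpow hlam.le hy hp0.le)
    calc ENNReal.ofReal (lam ^ p) * volume {y : EuclideanSpace ℝ (Fin N) | lam ≤ |u (y, t)|}
        ≤ ENNReal.ofReal (lam ^ p) *
          volume {y | ENNReal.ofReal (lam ^ p) ≤ ENNReal.ofReal (|u (y, t)| ^ p)} :=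
          mul_le_mul_of_nonneg_left (measure_mono hsub) (zero_le)
      _ ≤ ∫⁻ y, ENNReal.ofReal (|u (y, t)| ^ p) := mul_meas_ge_le_lintegral₀ hmeas _
      _ ≤ ENNReal.ofReal (M ^ p) := hMle
  -- Step A: main inequality for each r
  have hball : ∀ r : ℝ, 0 ≤ r → volume (Metric.ball (0 : EuclideanSpace ℝ (Fin N)) r)
      = ENNReal.ofReal (r ^ N * v) := by
    intro r hr
    rw [Measure.addHaar_ball _ _ hr, finrank_euclideanSpace, Fintype.card_fin,
      ENNReal.ofReal_mul (pow_nonneg hr _), hvdef,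
      ENNReal.ofReal_toReal measure_ball_lt_top.ne]
  have key : ∀ r : ℝ, 0 < r → |u (x, t)| ≤ S * r ^ l + C₂ * (M * r ^ (-(N : ℝ) / p)) := by
    intro r hr
    refine le_of_forall_pos_le_add ?_
    intro ε hε
    set lam : ℝ := Kc * M * r ^ (-(N : ℝ) / p) + ε / 2 ^ k with hlamdef
    have hrp : (0:ℝ) < r ^ (-(N : ℝ) / p) := Real.rpow_pos_of_pos hr _
    have hlam : 0 < lam := by positivity
    have hreal : (k : ℝ) * M ^ p < lam ^ p * (r ^ N * v) := by
      have hrNv : (0:ℝ) < r ^ N * v := by positivity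
      rcases eq_or_lt_of_le hM0 with hM | hM
      · rw [← hM, Real.zero_rpow hp0.ne']
        have : (0:ℝ) < lam ^ p * (r ^ N * v) := by positivity
        simpa using this
      · have h1 : Kc * M * r ^ (-(N:ℝ)/p) < lam := by
          rw [hlamdef]; have : (0:ℝ) < ε / 2 ^ k := by positivity
          linarith
        have h2 : (Kc * M * r ^ (-(N:ℝ)/p)) ^ p < lam ^ p :=
          Real.rpow_lt_rpow (by positivity) h1 hp0
        have h3 : (Kc * M * r ^ (-(N:ℝ)/p)) ^ p = (2*k/v) * M^p * r ^ (-(N:ℝ)) := by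
          rw [Real.mul_rpow (by positivity) hrp.le, Real.mul_rpow (by positivity) hM.le]
          rw [hKdef, ← Real.rpow_mul (by positivity : (0:ℝ) ≤ 2 * (k:ℝ) / v),
            one_div_mul_cancel hp0.ne', Real.rpow_one,
            ← Real.rpow_mul hr.le]
          congr 1
          congr 1
          field_simp
        have h4 : (2*(k:ℝ)/v) * M^p * r^(-(N:ℝ)) * (r^N*v) = 2*k*M^p := by
          have hrr : r ^ (-(N:ℝ)) * r ^ (N:ℕ) = 1 := by
            rw [← Real.rpow_natCast r N, ← Real.rpow_add hr]
            simp
          have hq : (2*(k:ℝ)/v) * M^p * r^(-(N:ℝ)) * (r^N*v)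
              = 2*(k:ℝ)*M^p * (r^(-(N:ℝ)) * r^(N:ℕ)) * (v⁻¹ * v) := by ring
          rw [hq, hrr, inv_mul_cancel₀ hv.ne']
          ring
        have h5 : (Kc * M * r ^ (-(N:ℝ)/p)) ^ p * (r^N*v) < lam ^ p * (r^N*v) :=
          mul_lt_mul_of_pos_right h2 hrNv
        rw [h3] at h5
        rw [h4] at h5
        have hMp : (0:ℝ) < M ^ p := Real.rpow_pos_of_pos hM p
        have hk1' : (1:ℝ) ≤ (k:ℝ) := by exact_mod_cast hk1
        have h6 : (0:ℝ) < (k:ℝ) * M ^ p := by positivity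
        nlinarith [h5, h6, hMp, hk1']
    have hvol : (k : ℝ≥0∞) * volume {y : EuclideanSpace ℝ (Fin N) | lam ≤ |u (y, t)|}
        < volume (Metric.ball (0 : EuclideanSpace ℝ (Fin N)) r) := by
      rw [hball r hr.le]
      have hc := cheb lam hlam
      rw [← (ENNReal.mul_right_strictMono (a := ENNReal.ofReal (lam ^ p))
        (ENNReal.ofReal_pos.mpr (by positivity)).ne' ENNReal.ofReal_ne_top).lt_iff_lt]
      calc ENNReal.ofReal (lam ^ p) *
            ((k : ℝ≥0∞) * volume {y : EuclideanSpace ℝ (Fin N) | lam ≤ |u (y, t)|})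
          = (k : ℝ≥0∞) * (ENNReal.ofReal (lam ^ p) *
            volume {y : EuclideanSpace ℝ (Fin N) | lam ≤ |u (y, t)|}) := by ring
        _ ≤ (k : ℝ≥0∞) * ENNReal.ofReal (M ^ p) := mul_le_mul_of_nonneg_left hc (zero_le)
        _ = ENNReal.ofReal ((k : ℝ) * M ^ p) := by
            rw [ENNReal.ofReal_mul (by positivity), ENNReal.ofReal_natCast]
        _ < ENNReal.ofReal (lam ^ p * (r ^ N * v)) :=
            (ENNReal.ofReal_lt_ofReal_iff (by positivity)).mpr hreal
        _ = ENNReal.ofReal (lam ^ p) * ENNReal.ofReal (r ^ N * v) :=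
            ENNReal.ofReal_mul (by positivity)
    obtain ⟨h, hhr, hgood⟩ := exists_shift (fun y => |u (y, t)|) x lam r hvol
    have hchoose : (∑ i ∈ Finset.Icc 1 k, (k.choose i : ℝ)) ≤ 2 ^ k := by
      have hn : (∑ i ∈ Finset.Icc 1 k, k.choose i) ≤ 2 ^ k := by
        rw [← Nat.sum_range_choose k]
        apply Finset.sum_le_sum_of_subset
        intro i hi
        simp only [Finset.mem_Icc] at hi
        simp only [Finset.mem_range, Nat.lt_succ_iff]
        omega
      calc (∑ i ∈ Finset.Icc 1 k, (k.choose i : ℝ)) = ((∑ i ∈ Finset.Icc 1 k, k.choose i : ℕ) : ℝ) := by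
            push_cast; ring
        _ ≤ ((2 ^ k : ℕ) : ℝ) := by exact_mod_cast hn
        _ = 2 ^ k := by push_cast; ring
    have hfinal : |u (x, t)| ≤ S * r ^ l + 2 ^ k * lam := by
      have hrl : (0:ℝ) ≤ S * r ^ l := by positivity
      have h2k1 : (1:ℝ) ≤ 2 ^ k := one_le_pow₀ (by norm_num)
      by_cases hh0 : h = 0
      · have h1 := hgood 1 (by simp [hk1])
        rw [hh0] at h1
        simp only [smul_zero, add_zero, Nat.cast_one] at h1
        nlinarith
      · have hsplit : fdiffP u k h 0 x t = (-1:ℝ)^k * u (x, t)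
            + ∑ i ∈ Finset.Icc 1 k, (-1:ℝ)^(k-i) * (k.choose i : ℝ) * u (x + (i:ℝ) • h, t) := by
          rw [fdiffP]
          rw [show Finset.range (k+1) = insert 0 (Finset.Icc 1 k) from by
            ext i
            simp only [Finset.mem_range, Finset.mem_insert, Finset.mem_Icc, Nat.lt_succ_iff]
            omega]
          rw [Finset.sum_insert (by simp)]
          simp
        have habs : |u (x, t)| ≤ |fdiffP u k h 0 x t|
            + ∑ i ∈ Finset.Icc 1 k, (k.choose i : ℝ) * |u (x + (i:ℝ) • h, t)| := by
          have h3 : |u (x, t)| = |(-1:ℝ)^k * u (x, t)| := by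
            rw [abs_mul, abs_pow, abs_neg, abs_one, one_pow, one_mul]
          have h2 : (-1:ℝ)^k * u (x, t) = fdiffP u k h 0 x t
              - ∑ i ∈ Finset.Icc 1 k, (-1:ℝ)^(k-i) * (k.choose i : ℝ) * u (x + (i:ℝ) • h, t) := by
            linarith [hsplit]
          rw [h3, h2]
          refine (abs_sub _ _).trans ?_
          gcongr
          refine (Finset.abs_sum_le_sum_abs _ _).trans ?_
          apply Finset.sum_le_sum
          intro i _
          rw [abs_mul, abs_mul, abs_pow, abs_neg, abs_one, one_pow, one_mul,
            Nat.abs_cast]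
        have hsum : ∑ i ∈ Finset.Icc 1 k, (k.choose i : ℝ) * |u (x + (i:ℝ) • h, t)|
            ≤ 2 ^ k * lam := by
          calc ∑ i ∈ Finset.Icc 1 k, (k.choose i : ℝ) * |u (x + (i:ℝ) • h, t)|
              ≤ ∑ i ∈ Finset.Icc 1 k, (k.choose i : ℝ) * lam := by
                apply Finset.sum_le_sum
                intro i hi
                exact mul_le_mul_of_nonneg_left (hgood i hi).le (by positivity)
            _ = (∑ i ∈ Finset.Icc 1 k, (k.choose i : ℝ)) * lam := by rw [Finset.sum_mul]
            _ ≤ 2 ^ k * lam := mul_le_mul_of_nonneg_right hchoose hlam.le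
        have hfd : |fdiffP u k h 0 x t| ≤ S * r ^ l := by
          refine (hSle h hh0).trans ?_
          exact mul_le_mul_of_nonneg_left
            (Real.rpow_le_rpow (norm_nonneg _) hhr.le hl.le) hS0
        linarith
      -- end by_cases
    have h2kne : (2:ℝ) ^ k ≠ 0 := by positivity
    calc |u (x, t)| ≤ S * r ^ l + 2 ^ k * (Kc * M * r ^ (-(N:ℝ)/p) + ε / 2 ^ k) := hfinal
      _ = S * r ^ l + C₂ * (M * r ^ (-(N : ℝ) / p)) + ε := by
          rw [hC2def]; field_simp; ring
  -- Step B: optimize in r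
  have hNp : (0:ℝ) < (N:ℝ)/p := by
    have : (0:ℝ) < (N:ℝ) := by exact_mod_cast hN
    positivity
  rcases eq_or_lt_of_le hS0 with hS | hS
  · -- S = 0
    have hA0 : |u (x, t)| ≤ 0 := by
      refine le_zero_of_forall_rpow (abs_nonneg _) (by positivity : (0:ℝ) ≤ C₂ * M)
        (e := -(N:ℝ)/p) (by rw [neg_div]; exact neg_ne_zero.mpr hNp.ne') ?_
      intro r hr
      have hkey := key r hr
      rw [← hS] at hkey
      calc |u (x, t)| ≤ 0 * r ^ l + C₂ * (M * r ^ (-(N:ℝ)/p)) := hkey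
        _ = C₂ * M * r ^ (-(N:ℝ)/p) := by ring
    have hAeq : |u (x, t)| = 0 := le_antisymm hA0 (abs_nonneg _)
    rw [hAeq, ← hS, Real.zero_rpow hσpos.ne']
    simp
  rcases eq_or_lt_of_le hM0 with hM | hM
  · -- M = 0
    have hA0 : |u (x, t)| ≤ 0 := by
      refine le_zero_of_forall_rpow (abs_nonneg _) hS0 (e := l) hl.ne' ?_
      intro r hr
      have hkey := key r hr
      rw [← hM] at hkey
      calc |u (x, t)| ≤ S * r ^ l + C₂ * (0 * r ^ (-(N:ℝ)/p)) := hkey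
        _ = S * r ^ l := by ring
    have hAeq : |u (x, t)| = 0 := le_antisymm hA0 (abs_nonneg _)
    rw [hAeq, ← hM, Real.zero_rpow (by linarith : 1 - σ ≠ 0)]
    simp
  · -- main case : 0 < S, 0 < M
    have hdiv : (0:ℝ) < M / S := div_pos hM hS
    set r : ℝ := (M/S) ^ (p/(l*p+(N:ℝ))) with hrdef
    have hrpos : 0 < r := Real.rpow_pos_of_pos hdiv _
    have e1 : S * r ^ l = S ^ σ * M ^ (1-σ) := by
      rw [hrdef, ← Real.rpow_mul hdiv.le,
        show p/(l*p+(N:ℝ))*l = 1 - σ from by rw [hσdef]; field_simp; ring,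
        Real.div_rpow hM0 hS0]
      have hSσ : S ^ σ * S ^ (1-σ) = S := by
        rw [← Real.rpow_add hS]; norm_num
      have hS1 : S ^ (1-σ) ≠ 0 := ne_of_gt (Real.rpow_pos_of_pos hS _)
      field_simp
      linear_combination -hSσ
    have e2 : M * r ^ (-(N:ℝ)/p) = S ^ σ * M ^ (1-σ) := by
      rw [hrdef, ← Real.rpow_mul hdiv.le,
        show p/(l*p+(N:ℝ)) * (-(N:ℝ)/p) = -σ from by rw [hσdef]; field_simp,
        Real.rpow_neg hdiv.le, ← Real.inv_rpow hdiv.le, inv_div, Real.div_rpow hS0 hM0]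
      have hMσ : M ^ σ * M ^ (1-σ) = M := by
        rw [← Real.rpow_add hM]; norm_num
      have hM1 : M ^ σ ≠ 0 := ne_of_gt (Real.rpow_pos_of_pos hM _)
      field_simp
      linear_combination -hMσ
    have hkey := key r hrpos
    rw [e1, e2] at hkey
    calc |u (x, t)| ≤ S ^ σ * M ^ (1-σ) + C₂ * (S ^ σ * M ^ (1-σ)) := hkey
      _ = (1 + C₂) * S ^ σ * M ^ (1-σ) := by ring
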